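/- arXiv:2001.07485 — 5 statements merged into one kernel-verified Lean document; each statement's English description precedes it below -/
import Mathlib

section
/- For every integer k ≥ 1, the differential entropy of the chi-squared distribution with 2k degrees of freedom satisfies −∫₀^∞ p_k(t) log p_k(t) dt ≥ (1/2) log(8πk). -/
open MeasureTheory Real Set

lemma integrableOn_pow_mul_exp (m : ℕ) :
    IntegrableOn (fun t : ℝ => t ^ m * Real.exp (-t / 2)) (Ioi 0) := by
  have h := Real.GammaIntegral_convergent (s := (m + 1 : ℝ)) (by positivity)
  rw [show (0:ℝ) = 0 * (1/2) by ring, ← integrableOn_Ioi_comp_mul_right_iff _ 0 (by norm_num : (0:ℝ) < 1/2)] at h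
  have h2 : IntegrableOn (fun t : ℝ => ((1:ℝ)/2)^m * (t ^ m * Real.exp (-t / 2))) (Ioi 0) := by
    refine h.congr_fun (fun t ht => ?_) measurableSet_Ioi
    rw [add_sub_cancel_right]; simp only [Real.rpow_natCast, mul_pow]
    ring_nf
  have heq : (fun t : ℝ => t ^ m * Real.exp (-t/2)) =
      fun t => (2:ℝ)^m * (((1:ℝ)/2)^m * (t^m * Real.exp (-t/2))) := by
    funext t; rw [← mul_assoc, ← mul_pow]; norm_num
  rw [heq]
  exact h2.const_mul _

lemma integral_pow_mul_exp (m : ℕ) :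
    ∫ t in Ioi (0:ℝ), t ^ m * Real.exp (-t / 2) = 2 ^ (m+1) * (m.factorial : ℝ) := by
  have h := integral_rpow_mul_exp_neg_mul_Ioi (a := (m + 1 : ℝ)) (r := 1/2) (by positivity)
    (by norm_num)
  rw [setIntegral_congr_fun measurableSet_Ioi (g := fun t : ℝ => t ^ ((m+1:ℝ)-1) * Real.exp (-(1/2 * t)))
    (fun t ht => ?_)]
  · have h2 : ((1:ℝ)/(1/2)) ^ ((m:ℝ)+1) = 2 ^ (m+1) := by
      rw [show ((1:ℝ)/(1/2)) = 2 by norm_num,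
        show ((m:ℝ)+1) = ((m+1 : ℕ) : ℝ) by push_cast; ring, Real.rpow_natCast]
    rw [h, h2, Real.Gamma_nat_eq_factorial m]
  · simp only [add_sub_cancel_right, Real.rpow_natCast]
    ring_nf

lemma integrableOn_pow_mul_exp_mul_log (m : ℕ) :
    IntegrableOn (fun t : ℝ => t ^ m * Real.exp (-t / 2) * Real.log t) (Ioi 0) := by
  have hmeas : AEStronglyMeasurable (fun t : ℝ => t ^ m * Real.exp (-t / 2) * Real.log t)
      (volume.restrict (Ioi 0)) := by
    refine Measurable.aestronglyMeasurable ?_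
    exact ((measurable_id.pow_const m).mul ((measurable_id.neg.div_const 2).exp)).mul
      Real.measurable_log
  rw [show Ioi (0:ℝ) = Ioc 0 1 ∪ Ioi 1 from (Ioc_union_Ioi_eq_Ioi (by norm_num)).symm]
  refine IntegrableOn.union ?_ ?_
  · -- on Ioc 0 1, bound by 2 * t ^ (-(1/2) : ℝ)
    have hint : IntegrableOn (fun t : ℝ => 2 * t ^ (-(1:ℝ)/2)) (Ioc 0 1) := by
      have := intervalIntegral.intervalIntegrable_rpow' (a := 0) (b := 1)
        (r := -(1:ℝ)/2) (by norm_num)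
      rw [intervalIntegrable_iff, uIoc_of_le (by norm_num : (0:ℝ) ≤ 1)] at this
      exact this.const_mul 2
    refine Integrable.mono hint (hmeas.mono_measure (Measure.restrict_mono
      (fun x hx => hx.1) le_rfl)) ?_
    refine (ae_restrict_iff' measurableSet_Ioc).2 (ae_of_all _ (fun t ht => ?_))
    obtain ⟨ht0, ht1⟩ := ht
    have hs : (0:ℝ) < Real.sqrt t := Real.sqrt_pos.2 ht0
    have h1 : -Real.log t ≤ 2 / Real.sqrt t := by
      have : Real.log (1 / Real.sqrt t) ≤ 1 / Real.sqrt t - 1 :=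
        Real.log_le_sub_one_of_pos (by positivity)
      rw [Real.log_div one_ne_zero hs.ne', Real.log_one, Real.log_sqrt ht0.le] at this
      have h2 : 2 * (1 / Real.sqrt t) = 2 / Real.sqrt t := by ring
      linarith
    have hlt : Real.log t ≤ 0 := Real.log_nonpos ht0.le ht1
    have habs : |t ^ m * Real.exp (-t / 2) * Real.log t|
        = t ^ m * Real.exp (-t / 2) * (-Real.log t) := by
      rw [abs_of_nonpos (mul_nonpos_of_nonneg_of_nonpos (by positivity) hlt)]; ring
    have hb1 : t ^ m ≤ 1 := pow_le_one₀ ht0.le ht1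
    have hb2 : Real.exp (-t/2) ≤ 1 := Real.exp_le_one_iff.2 (by linarith)
    have hrp : (2:ℝ) * t ^ (-(1:ℝ)/2) = 2 / Real.sqrt t := by
      rw [show (-(1:ℝ)/2) = -(1/2) by ring, Real.rpow_neg ht0.le,
        ← Real.sqrt_eq_rpow]
      ring
    rw [Real.norm_eq_abs, Real.norm_eq_abs, habs, hrp, abs_of_nonneg (by positivity)]
    have hA : t ^ m * Real.exp (-t/2) ≤ 1 :=
      mul_le_one₀ hb1 (Real.exp_pos _).le hb2
    calc t ^ m * Real.exp (-t / 2) * -Real.log t ≤ 1 * -Real.log t :=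
          mul_le_mul_of_nonneg_right hA (neg_nonneg.2 hlt)
      _ = -Real.log t := one_mul _
      _ ≤ 2 / Real.sqrt t := h1
  · have hint : IntegrableOn (fun t : ℝ => t ^ (m+1) * Real.exp (-t / 2)) (Ioi 1) :=
      (integrableOn_pow_mul_exp (m+1)).mono_set (Ioi_subset_Ioi zero_le_one)
    refine Integrable.mono hint (hmeas.mono_measure (Measure.restrict_mono
      (Ioi_subset_Ioi zero_le_one) le_rfl)) ?_
    refine (ae_restrict_iff' measurableSet_Ioi).2 (ae_of_all _ (fun t ht => ?_))
    have ht1 : (1:ℝ) < t := ht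
    have ht0 : (0:ℝ) < t := lt_trans one_pos ht1
    have hl0 : 0 ≤ Real.log t := Real.log_nonneg ht1.le
    have hl : Real.log t ≤ t := (Real.log_le_sub_one_of_pos ht0).trans (by linarith)
    rw [Real.norm_eq_abs, Real.norm_eq_abs,
      abs_of_nonneg (by positivity), abs_of_nonneg (by positivity)]
    calc t ^ m * Real.exp (-t / 2) * Real.log t ≤ t ^ m * Real.exp (-t / 2) * t := by
          exact mul_le_mul_of_nonneg_left hl (by positivity)
      _ = t ^ (m+1) * Real.exp (-t/2) := by ring

lemma stirling_log_lb (k : ℕ) (hk : 1 ≤ k) :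
    (1/2:ℝ) * Real.log π + (1/2) * Real.log (2*k) + k * Real.log k - k
      ≤ Real.log (k.factorial : ℝ) := by
  have hk0 : (0:ℝ) < k := by exact_mod_cast hk
  have hden : (0:ℝ) < Real.sqrt (2*k) * ((k:ℝ)/Real.exp 1)^k := by positivity
  have hs : Real.sqrt π ≤ Stirling.stirlingSeq k := by
    obtain ⟨n, rfl⟩ : ∃ n, k = n + 1 := ⟨k-1, (Nat.succ_pred_eq_of_pos hk).symm⟩
    exact Stirling.stirlingSeq'_antitone.le_of_tendsto
      ((Stirling.tendsto_stirlingSeq_sqrt_pi).comp (Filter.tendsto_add_atTop_nat 1)) n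
  rw [Stirling.stirlingSeq, le_div_iff₀ hden] at hs
  have hlog := Real.log_le_log (by positivity) hs
  rw [Real.log_mul (by positivity) hden.ne', Real.log_mul (by positivity) (by positivity),
    Real.log_sqrt Real.pi_pos.le, Real.log_sqrt (by positivity), Real.log_pow,
    Real.log_div hk0.ne' (Real.exp_pos 1).ne', Real.log_exp] at hlog
  linarith

/-- Probability density of the chi-squared distribution with `2k` degrees of freedom. -/
noncomputable def chiSqPDF (k : ℕ) (t : ℝ) : ℝ :=
  t ^ (k - 1) * Real.exp (-t / 2) / (2 ^ k * Real.Gamma k)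

/-- The differential entropy of the chi-squared distribution with `2k` degrees of freedom
is at least `(1/2) log (8 π k)`. -/
theorem chiSq_entropy_lower_bound (k : ℕ) (hk : 1 ≤ k) :
    (1 / 2 : ℝ) * Real.log (8 * Real.pi * k) ≤
      -∫ t in Ioi (0 : ℝ), chiSqPDF k t * Real.log (chiSqPDF k t) := by
  obtain ⟨m, rfl⟩ : ∃ m, k = m + 1 := ⟨k - 1, (Nat.succ_pred_eq_of_pos hk).symm⟩
  have hGamma : Real.Gamma ((m+1 : ℕ) : ℝ) = (m.factorial : ℝ) := by
    push_cast; exact Real.Gamma_nat_eq_factorial m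
  set D : ℝ := 2^(m+1) * (m.factorial : ℝ) with hDdef
  have hD0 : 0 < D := by positivity
  set p : ℝ → ℝ := fun t => t^m * Real.exp (-t/2) / D with hpdef
  have hp : ∀ t, chiSqPDF (m+1) t = p t := by
    intro t; rw [chiSqPDF, Nat.add_sub_cancel, hGamma]
  have hKpos : (0:ℝ) < (m:ℝ) + 1 := by positivity
  -- integrability
  have hip : IntegrableOn p (Ioi 0) := (integrableOn_pow_mul_exp m).div_const D
  have hitp : IntegrableOn (fun t => t * p t) (Ioi 0) := by
    have h0 : IntegrableOn (fun t : ℝ => t ^ (m+1) * Real.exp (-t/2) / D) (Ioi 0) :=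
      ((integrableOn_pow_mul_exp (m+1)).div_const D)
    refine h0.congr_fun (fun t ht => ?_) measurableSet_Ioi
    simp only [hpdef]; ring
  have hilogt : IntegrableOn (fun t => p t * Real.log t) (Ioi 0) := by
    have h0 : IntegrableOn (fun t : ℝ => t ^ m * Real.exp (-t/2) * Real.log t / D) (Ioi 0) :=
      ((integrableOn_pow_mul_exp_mul_log m).div_const D)
    refine h0.congr_fun (fun t ht => ?_) measurableSet_Ioi
    simp only [hpdef]; ring
  -- integrals
  have hIp : ∫ t in Ioi (0:ℝ), p t = 1 := by
    simp only [hpdef]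
    rw [integral_div, integral_pow_mul_exp m]
    field_simp
    exact hDdef.symm
  have hItp : ∫ t in Ioi (0:ℝ), t * p t = 2*((m:ℝ)+1) := by
    rw [setIntegral_congr_fun measurableSet_Ioi
      (g := fun t : ℝ => t^(m+1) * Real.exp (-t/2) / D) (fun t ht => by simp only [hpdef]; ring)]
    rw [integral_div, integral_pow_mul_exp (m+1), hDdef]
    rw [Nat.factorial_succ]
    push_cast
    field_simp
    ring
  -- log formula
  have hlog : ∀ t ∈ Ioi (0:ℝ), Real.log (p t)
      = (m:ℝ) * Real.log t - t/2 - Real.log D := by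
    intro t ht
    have ht0 : (0:ℝ) < t := ht
    simp only [hpdef]
    rw [Real.log_div (by positivity) hD0.ne', Real.log_mul (by positivity) (Real.exp_pos _).ne',
      Real.log_pow, Real.log_exp]
    ring
  -- integrability of p log p
  have hint_plogp : IntegrableOn (fun t => p t * Real.log (p t)) (Ioi 0) := by
    have hcomb : IntegrableOn
        (fun t => (m:ℝ) * (p t * Real.log t) - (1/2) * (t * p t) - Real.log D * p t)
        (Ioi 0) := ((hilogt.const_mul (m:ℝ)).sub (hitp.const_mul (1/2))).sub
          (hip.const_mul (Real.log D))
    refine hcomb.congr_fun (fun t ht => ?_) measurableSet_Ioi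
    rw [hlog t ht]; ring
  -- the linear upper bound
  set c₂ : ℝ := (m:ℝ)/(2*((m:ℝ)+1)) - 1/2 with hc2
  set c₁ : ℝ := (m:ℝ) * (Real.log (2*((m:ℝ)+1)) - 1) - Real.log D with hc1
  have hintU : IntegrableOn (fun t => c₁ * p t + c₂ * (t * p t)) (Ioi 0) :=
    (hip.const_mul c₁).add (hitp.const_mul c₂)
  have hbound : ∀ t ∈ Ioi (0:ℝ),
      p t * Real.log (p t) ≤ c₁ * p t + c₂ * (t * p t) := by
    intro t ht
    have ht0 : (0:ℝ) < t := ht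
    have hlt : Real.log t ≤ t/(2*((m:ℝ)+1)) - 1 + Real.log (2*((m:ℝ)+1)) := by
      have h1 : Real.log (t / (2*((m:ℝ)+1))) ≤ t/(2*((m:ℝ)+1)) - 1 :=
        Real.log_le_sub_one_of_pos (by positivity)
      rw [Real.log_div ht0.ne' (by positivity)] at h1
      linarith
    have hub : Real.log (p t) ≤
        (m:ℝ) * (t/(2*((m:ℝ)+1)) - 1 + Real.log (2*((m:ℝ)+1))) - t/2 - Real.log D := by
      rw [hlog t ht]
      have := mul_le_mul_of_nonneg_left hlt (by positivity : (0:ℝ) ≤ (m:ℝ))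
      linarith
    have hp0 : 0 ≤ p t := by simp only [hpdef]; positivity
    calc p t * Real.log (p t)
        ≤ p t * ((m:ℝ) * (t/(2*((m:ℝ)+1)) - 1 + Real.log (2*((m:ℝ)+1))) - t/2 - Real.log D) :=
          mul_le_mul_of_nonneg_left hub hp0
      _ = c₁ * p t + c₂ * (t * p t) := by rw [hc1, hc2]; field_simp; ring
  have hmono : (∫ t in Ioi (0:ℝ), p t * Real.log (p t))
      ≤ ∫ t in Ioi (0:ℝ), c₁ * p t + c₂ * (t * p t) :=
    setIntegral_mono_on hint_plogp hintU measurableSet_Ioi hbound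
  have hIU : (∫ t in Ioi (0:ℝ), c₁ * p t + c₂ * (t * p t)) = c₁ + c₂ * (2*((m:ℝ)+1)) := by
    rw [integral_add (hip.const_mul c₁) (hitp.const_mul c₂), integral_const_mul,
      integral_const_mul, hIp, hItp]
    ring
  -- rewrite goal
  have hgoal : (∫ t in Ioi (0:ℝ), chiSqPDF (m+1) t * Real.log (chiSqPDF (m+1) t))
      = ∫ t in Ioi (0:ℝ), p t * Real.log (p t) := by
    simp only [hp]
  rw [hgoal]
  -- final arithmetic
  have hlogD : Real.log D = ((m:ℝ)+1) * Real.log 2 + Real.log (m.factorial : ℝ) := by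
    rw [hDdef, Real.log_mul (by positivity) (by positivity), Real.log_pow]
    push_cast; ring
  have hfacsucc : Real.log (((m+1).factorial : ℝ))
      = Real.log ((m:ℝ)+1) + Real.log (m.factorial : ℝ) := by
    rw [Nat.factorial_succ]
    push_cast
    rw [Real.log_mul (by positivity) (by positivity)]
  have hstir := stirling_log_lb (m+1) (Nat.le_add_left 1 m)
  have hlog2K : Real.log (2*((m:ℝ)+1)) = Real.log 2 + Real.log ((m:ℝ)+1) :=
    Real.log_mul two_ne_zero hKpos.ne'
  have hlog8 : Real.log (8 * Real.pi * ((m:ℕ)+1:ℝ))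
      = 3 * Real.log 2 + Real.log Real.pi + Real.log ((m:ℝ)+1) := by
    rw [Real.log_mul (by positivity) hKpos.ne', Real.log_mul (by norm_num) Real.pi_pos.ne',
      show (8:ℝ) = 2^3 by norm_num, Real.log_pow]
    push_cast; ring
  push_cast at hstir
  rw [hlog2K] at hstir
  push_cast [hlog8]
  have hfin : -(c₁ + c₂ * (2*((m:ℝ)+1)))
      = ((m:ℝ)+1) + Real.log D - (m:ℝ) * Real.log (2*((m:ℝ)+1)) := by
    rw [hc1, hc2]; field_simp; ring
  have := neg_le_neg (hmono.trans_eq hIU)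
  rw [hfin] at this
  refine le_trans ?_ this
  rw [hlogD, hlog2K]
  nlinarith [hstir, hfacsucc]
end

section
/- Let E > 0 and c > 0 be real numbers, and let (J_n)_{n≥0} be any sequence of nonnegative reals satisfying J_{n+1} = E + c − c²/(J_n + c) for all n ≥ 0. Then J_n converges, as n → ∞, to the stationary solution J* = E/2 + (1/2)√(E² + 4cE), independently of the starting condition J₀ ≥ 0. -/
open Filter

/-- Any nonnegative solution of the Riccati difference equation
`J_{n+1} = E + c − c²/(J_n + c)` converges to the stationary solution
`J* = E/2 + (1/2)√(E² + 4cE)`, independently of the starting condition. -/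
theorem riccati_recursion_tendsto_stationary (E c : ℝ) (hE : 0 < E) (hc : 0 < c)
    (J : ℕ → ℝ) (hJpos : ∀ n, 0 ≤ J n)
    (hJrec : ∀ n, J (n + 1) = E + c - c ^ 2 / (J n + c)) :
    Tendsto J atTop (nhds (E / 2 + (1 / 2) * Real.sqrt (E ^ 2 + 4 * c * E))) := by
  set s := Real.sqrt (E ^ 2 + 4 * c * E) with hs_def
  have hs2 : s ^ 2 = E ^ 2 + 4 * c * E := Real.sq_sqrt (by positivity)
  have hsE : E ≤ s := by
    have h1 : Real.sqrt (E ^ 2) ≤ s := Real.sqrt_le_sqrt (by nlinarith)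
    rwa [Real.sqrt_sq hE.le] at h1
  set L := E / 2 + (1 / 2) * s with hL_def
  have hLE : E ≤ L := by rw [hL_def]; linarith
  have hLc : 0 < L + c := by linarith
  have hLsq : L ^ 2 = E * L + E * c := by rw [hL_def]; nlinarith [hs2]
  clear_value s
  clear hs_def hs2 hsE
  clear_value L
  -- fixed point
  have hfix : E + c - L = c ^ 2 / (L + c) := by
    rw [eq_div_iff hLc.ne']
    nlinarith [hLsq]
  set q := c ^ 2 / (E + c) ^ 2 with hq_def
  have hEc : 0 < E + c := by linarith
  have hq0 : 0 ≤ q := by positivity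
  have hq1 : q < 1 := by
    rw [hq_def, div_lt_one (by positivity)]
    nlinarith
  have hqmul : ∀ a : ℝ, E ≤ a → c ^ 2 ≤ q * ((a + c) * (L + c)) := by
    intro a ha
    rw [hq_def, div_mul_eq_mul_div, le_div_iff₀ (by positivity)]
    have h1 : (E + c) * (E + c) ≤ (a + c) * (L + c) :=
      mul_le_mul (by linarith) (by linarith) (by linarith) (by linarith)
    nlinarith [mul_le_mul_of_nonneg_left h1 (sq_nonneg c)]
  clear_value q
  clear hq_def
  -- J (n+1) ≥ E
  have hge : ∀ n, E ≤ J (n + 1) := by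
    intro n
    have h1 : c ^ 2 / (J n + c) ≤ c := by
      rw [div_le_iff₀ (by have := hJpos n; linarith)]
      nlinarith [hJpos n]
    rw [hJrec n]; linarith
  -- contraction
  have hcontr : ∀ n, |J (n + 2) - L| ≤ q * |J (n + 1) - L| := by
    intro n
    have ha : E ≤ J (n + 1) := hge n
    have hac : 0 < J (n + 1) + c := by linarith
    have e1 : J (n + 2) - L = c ^ 2 / (L + c) - c ^ 2 / (J (n + 1) + c) := by
      rw [hJrec (n + 1), ← hfix]; ring
    have e2 : c ^ 2 / (L + c) - c ^ 2 / (J (n + 1) + c)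
        = c ^ 2 * (J (n + 1) - L) / ((J (n + 1) + c) * (L + c)) := by
      field_simp
      ring
    rw [e1, e2, abs_div, abs_mul, abs_of_pos (mul_pos hac hLc),
      abs_of_nonneg (by positivity : (0:ℝ) ≤ c ^ 2),
      div_le_iff₀ (mul_pos hac hLc)]
    calc c ^ 2 * |J (n + 1) - L| ≤ q * ((J (n + 1) + c) * (L + c)) * |J (n + 1) - L| :=
          mul_le_mul_of_nonneg_right (hqmul _ ha) (abs_nonneg _)
      _ = q * |J (n + 1) - L| * ((J (n + 1) + c) * (L + c)) := by ring
  -- geometric bound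
  have hbound : ∀ n, |J (n + 1) - L| ≤ |J 1 - L| * q ^ n := by
    intro n
    induction n with
    | zero => simp
    | succ k ih =>
        calc |J (k + 2) - L| ≤ q * |J (k + 1) - L| := hcontr k
        _ ≤ q * (|J 1 - L| * q ^ k) := mul_le_mul_of_nonneg_left ih hq0
        _ = |J 1 - L| * q ^ (k + 1) := by ring
  have htend0 : Tendsto (fun n => |J (n + 1) - L|) atTop (nhds 0) := by
    apply squeeze_zero (fun n => abs_nonneg _) hbound
    have h := (tendsto_pow_atTop_nhds_zero_of_lt_one hq0 hq1).const_mul (|J 1 - L|)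
    rw [mul_zero] at h
    exact h
  have htend : Tendsto (fun n => J (n + 1)) atTop (nhds L) := by
    rw [tendsto_iff_dist_tendsto_zero]
    simpa [Real.dist_eq] using htend0
  exact (tendsto_add_atTop_iff_nat 1).mp htend
end

section
/- Let α > 0 and β be real numbers. Then lim_{P → ∞} (1/log P) · (1/2) log( P^α − (1 − e^{−P^β/2}) / (1 − e^{−P^{β−α}/2}) ) = (1/2) min(α + β, α), where the limit is over real P → ∞ and the argument of the outer logarithm is positive for all P > 1. -/
open Filter Real

lemma exp_neg_bounds {t : ℝ} (h0 : 0 ≤ t) (h1 : t ≤ 1) :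
    1 - t + t^2/2 - (2/9)*t^3 ≤ Real.exp (-t) ∧ Real.exp (-t) ≤ 1 - t + (3/4)*t^2 := by
  have habs : |(-t)| ≤ 1 := by rw [abs_neg, abs_of_nonneg h0]; exact h1
  have h2 := Real.exp_bound (n := 2) habs (by norm_num)
  have h3 := Real.exp_bound (n := 3) habs (by norm_num)
  rw [abs_neg, abs_of_nonneg h0] at h2 h3
  simp [Finset.sum_range_succ, Nat.factorial] at h2 h3
  rw [abs_sub_le_iff] at h2 h3
  constructor <;> nlinarith [h2.1, h2.2, h3.1, h3.2]

set_option maxHeartbeats 1000000 in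
lemma core_small {L x y : ℝ} (hL : 6 ≤ L) (hy : 0 < y) (hxy : x = L * y)
    (hx_half : x ≤ 1/2) :
    L*x/4 ≤ L - (1 - Real.exp (-x)) / (1 - Real.exp (-y)) ∧
    L - (1 - Real.exp (-x)) / (1 - Real.exp (-y)) ≤ 3*L*x/2 := by
  have hx : 0 < x := by nlinarith
  have hy_small : y ≤ 1/12 := by nlinarith
  have hby := exp_neg_bounds hy.le (by linarith)
  have hbx := exp_neg_bounds hx.le (by linarith)
  have hey := Real.add_one_le_exp (-y)
  have heyl : Real.exp (-y) < 1 := Real.exp_lt_one_iff.mpr (by linarith)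
  obtain ⟨fy, hfy⟩ : ∃ v, 1 - Real.exp (-y) = v := ⟨_, rfl⟩
  obtain ⟨fx, hfx⟩ : ∃ v, 1 - Real.exp (-x) = v := ⟨_, rfl⟩
  rw [hfy, hfx]
  have hfy_pos : 0 < fy := by rw [← hfy]; linarith
  have hfy_le : fy ≤ y := by rw [← hfy]; linarith
  have hfy_ge : y - (3/4)*y^2 ≤ fy := by rw [← hfy]; linarith [hby.2]
  have hfy_half : y/2 ≤ fy := by nlinarith
  have hfx_le : fx ≤ x - x^2/2 + (2/9)*x^3 := by rw [← hfx]; linarith [hbx.1]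
  have hfx_ge : x - (3/4)*x^2 ≤ fx := by rw [← hfx]; linarith [hbx.2]
  have hLfy_ge : x - (3/4)*(x*y) ≤ L * fy := by
    have h := mul_le_mul_of_nonneg_left hfy_ge (by linarith : (0:ℝ) ≤ L)
    have h2 : L * (y - (3/4)*y^2) = x - (3/4)*(x*y) := by rw [hxy]; ring
    linarith
  have hLfy_le : L * fy ≤ x := by
    have h := mul_le_mul_of_nonneg_left hfy_le (by linarith : (0:ℝ) ≤ L)
    rw [← hxy] at h; exact h
  have hxy6 : x*y ≤ x^2/6 := by nlinarith
  have hx3 : x^3 ≤ x^2/2 := by nlinarith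
  have hN_lo : x^2/4 ≤ L * fy - fx := by linarith
  have hN_hi : L * fy - fx ≤ (3/4)*x^2 := by linarith
  constructor
  · have key : fx / fy ≤ L - L*x/4 := by
      rw [div_le_iff₀ hfy_pos]
      have hmul : (L*x/4)*fy ≤ (L*x/4)*y := by
        apply mul_le_mul_of_nonneg_left hfy_le; positivity
      have hid : (L*x/4)*y = x^2/4 := by rw [hxy]; ring
      linarith [hmul, hid, hN_lo]
    linarith
  · have key : L - 3*L*x/2 ≤ fx / fy := by
      rw [le_div_iff₀ hfy_pos]
      have hmul : (3*L*x/2)*(y/2) ≤ (3*L*x/2)*fy := by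
        apply mul_le_mul_of_nonneg_left hfy_half; positivity
      have hid : (3*L*x/2)*(y/2) = (3/4)*(x^2) := by rw [hxy]; ring
      linarith [hmul, hid, hN_hi]
    linarith

lemma core_big {L x y : ℝ} (hL : 3 ≤ L) (hy : 0 < y) (hxy : x = L * y) (hx3 : 3 ≤ x) :
    L/3 ≤ L - (1 - Real.exp (-x)) / (1 - Real.exp (-y)) ∧
    L - (1 - Real.exp (-x)) / (1 - Real.exp (-y)) ≤ L := by
  have hx : 0 < x := by linarith
  have heyl : Real.exp (-y) < 1 := Real.exp_lt_one_iff.mpr (by linarith)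
  have hexl : Real.exp (-x) < 1 := Real.exp_lt_one_iff.mpr (by linarith)
  have hexp : (0:ℝ) < Real.exp (-x) := Real.exp_pos _
  have h1y : (0:ℝ) < 1 + y := by linarith
  have he : 1 + y ≤ Real.exp y := by linarith [Real.add_one_le_exp y]
  have hinv : Real.exp (-y) ≤ 1/(1+y) := by
    rw [Real.exp_neg, inv_eq_one_div]
    exact one_div_le_one_div_of_le h1y he
  obtain ⟨fy, hfy⟩ : ∃ v, 1 - Real.exp (-y) = v := ⟨_, rfl⟩
  obtain ⟨fx, hfx⟩ : ∃ v, 1 - Real.exp (-x) = v := ⟨_, rfl⟩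
  rw [hfy, hfx]
  have hfy_pos : 0 < fy := by rw [← hfy]; linarith
  have hfx_pos : 0 < fx := by rw [← hfx]; linarith
  have hfx_le1 : fx ≤ 1 := by rw [← hfx]; linarith
  have hfy_ge : y/(1+y) ≤ fy := by
    have hfrac : y/(1+y) = 1 - 1/(1+y) := by field_simp; ring
    rw [← hfy, hfrac]; linarith
  constructor
  · have hkey : 3*(1+y) ≤ 2*L*y := by nlinarith
    have hone : (1:ℝ) ≤ (2*L/3)*(y/(1+y)) := by
      rw [show (2*L/3)*(y/(1+y)) = (2*L*y/3)/(1+y) by ring, le_div_iff₀ h1y]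
      linarith
    have hstep : (2*L/3)*(y/(1+y)) ≤ (2*L/3)*fy := by
      apply mul_le_mul_of_nonneg_left hfy_ge; linarith
    have key : fx / fy ≤ 2*L/3 := by
      rw [div_le_iff₀ hfy_pos]
      calc fx ≤ 1 := hfx_le1
        _ ≤ (2*L/3)*(y/(1+y)) := hone
        _ ≤ (2*L/3)*fy := hstep
        _ = 2*L/3*fy := by ring
    linarith
  · have : 0 ≤ fx / fy := div_nonneg hfx_pos.le hfy_pos.le
    linarith

lemma core_pos {L x y : ℝ} (hL : 1 < L) (hy : 0 < y) (hxy : x = L * y) :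
    0 < L - (1 - Real.exp (-x)) / (1 - Real.exp (-y)) := by
  have hq : Real.exp (-y) < 1 := Real.exp_lt_one_iff.mpr (by linarith)
  have hs : (-1:ℝ) ≤ Real.exp (-y) - 1 := by linarith [Real.exp_pos (-y)]
  have hs' : Real.exp (-y) - 1 ≠ 0 := by linarith
  have h := one_add_mul_self_lt_rpow_one_add hs hs' hL
  rw [show (1:ℝ) + (Real.exp (-y) - 1) = Real.exp (-y) by ring, ← Real.exp_mul] at h
  rw [show -y * L = -(L*y) by ring, ← hxy] at h
  have hd : 0 < 1 - Real.exp (-y) := by linarith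
  rw [sub_pos, div_lt_iff₀ hd]
  nlinarith

lemma aux_log_tendsto {c : ℝ} (m : ℝ) (hc : 0 < c) :
    Tendsto (fun P : ℝ => (1 / Real.log P) * ((1/2) * Real.log (c * P ^ m))) atTop
      (nhds ((1/2) * m)) := by
  have h0 : Tendsto (fun P : ℝ => (Real.log P)⁻¹) atTop (nhds 0) :=
    Real.tendsto_log_atTop.inv_tendsto_atTop
  have h1 : Tendsto (fun P : ℝ => (1/2) * (Real.log c * (Real.log P)⁻¹ + m)) atTop
      (nhds ((1/2) * m)) := by
    have h2 := ((h0.const_mul (Real.log c)).add_const m).const_mul (1/2 : ℝ)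
    simpa using h2
  refine h1.congr' ?_
  filter_upwards [eventually_gt_atTop 1] with P hP
  have hP0 : (0:ℝ) < P := lt_trans one_pos hP
  have hlog : Real.log P ≠ 0 := (Real.log_pos hP).ne'
  rw [Real.log_mul hc.ne' (Real.rpow_pos_of_pos hP0 m).ne', Real.log_rpow hP0]
  linear_combination (-(m/2)) * mul_inv_cancel₀ hlog

lemma squeeze_log {f : ℝ → ℝ} {m c₁ c₂ : ℝ} (h₁ : 0 < c₁) (h₂ : 0 < c₂)
    (hb : ∀ᶠ P in atTop, c₁ * P ^ m ≤ f P ∧ f P ≤ c₂ * P ^ m) :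
    Tendsto (fun P : ℝ => (1 / Real.log P) * ((1/2) * Real.log (f P))) atTop
      (nhds ((1/2) * m)) := by
  refine tendsto_of_tendsto_of_tendsto_of_le_of_le' (aux_log_tendsto m h₁)
    (aux_log_tendsto m h₂) ?_ ?_
  · filter_upwards [hb, eventually_gt_atTop 1] with P hP hP1
    have hP0 : (0:ℝ) < P := lt_trans one_pos hP1
    have hlog : 0 ≤ 1 / Real.log P := by
      have := Real.log_pos hP1; positivity
    have hpow : 0 < c₁ * P ^ m := mul_pos h₁ (Real.rpow_pos_of_pos hP0 m)
    have hle := Real.log_le_log hpow hP.1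
    apply mul_le_mul_of_nonneg_left _ hlog
    apply mul_le_mul_of_nonneg_left hle (by norm_num)
  · filter_upwards [hb, eventually_gt_atTop 1] with P hP hP1
    have hP0 : (0:ℝ) < P := lt_trans one_pos hP1
    have hlog : 0 ≤ 1 / Real.log P := by
      have := Real.log_pos hP1; positivity
    have hpos : 0 < f P := lt_of_lt_of_le (mul_pos h₁ (Real.rpow_pos_of_pos hP0 m)) hP.1
    have hle := Real.log_le_log hpos hP.2
    apply mul_le_mul_of_nonneg_left _ hlog
    apply mul_le_mul_of_nonneg_left hle (by norm_num)

/-- GDoF asymptotics of the coherent-combining loss term: with oversampling factor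
`L = P^α` and frequency noise variance `σ² = P^β`, the argument
`P^α − (1 − e^{−P^β/2})/(1 − e^{−P^{β−α}/2})` is positive for all `P > 1`, and
`(1/log P)·(1/2) log(·)` tends to `(1/2) min(α + β, α)` as `P → ∞`. -/
theorem gdof_coherent_loss_term (α β : ℝ) (hα : 0 < α) :
    (∀ P : ℝ, 1 < P →
      0 < P ^ α - (1 - Real.exp (-(P ^ β) / 2)) / (1 - Real.exp (-(P ^ (β - α)) / 2))) ∧
    Tendsto (fun P : ℝ => (1 / Real.log P) *
        ((1 / 2) * Real.log
          (P ^ α - (1 - Real.exp (-(P ^ β) / 2)) / (1 - Real.exp (-(P ^ (β - α)) / 2)))))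
      atTop (nhds ((1 / 2) * min (α + β) α)) := by
  have hrw : ∀ P : ℝ, 0 < P → (P:ℝ)^β = P^α * P^(β-α) := by
    intro P hP
    rw [← Real.rpow_add hP]
    ring_nf
  constructor
  · intro P hP
    have hP0 : (0:ℝ) < P := lt_trans one_pos hP
    have hL : 1 < P ^ α := (Real.one_lt_rpow_iff_of_pos hP0).mpr (Or.inl ⟨hP, hα⟩)
    have hy : 0 < P ^ (β - α) / 2 := by
      have := Real.rpow_pos_of_pos hP0 (β - α); linarith
    rw [show -(P ^ β) / 2 = -(P ^ β / 2) by ring,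
        show -(P ^ (β - α)) / 2 = -(P ^ (β - α) / 2) by ring]
    exact core_pos hL hy (by rw [hrw P hP0]; ring)
  · rcases le_or_gt β 0 with hβ | hβ
    · rw [min_eq_left (by linarith : α + β ≤ α)]
      apply squeeze_log (c₁ := (1:ℝ)/8) (c₂ := (3:ℝ)/4) (by norm_num) (by norm_num)
      filter_upwards [(tendsto_rpow_atTop hα).eventually_ge_atTop 6,
        eventually_gt_atTop 1] with P hL6 hP1
      have hP0 : (0:ℝ) < P := lt_trans one_pos hP1
      have hy : 0 < P ^ (β - α) / 2 := by
        have := Real.rpow_pos_of_pos hP0 (β - α); linarith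
      have hβle : P ^ β ≤ 1 := Real.rpow_le_one_of_one_le_of_nonpos hP1.le hβ
      have hsum : P ^ (α + β) = P ^ α * P ^ β := by rw [← Real.rpow_add hP0]
      have hab := core_small (x := P ^ β / 2) (y := P ^ (β - α) / 2) hL6 hy
        (by rw [hrw P hP0]; ring) (by linarith)
      rw [show -(P ^ β) / 2 = -(P ^ β / 2) by ring,
          show -(P ^ (β - α)) / 2 = -(P ^ (β - α) / 2) by ring]
      constructor
      · calc (1:ℝ)/8 * P ^ (α + β) = P ^ α * (P ^ β / 2) / 4 := by rw [hsum]; ring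
          _ ≤ _ := hab.1
      · calc _ ≤ 3 * P ^ α * (P ^ β / 2) / 2 := hab.2
          _ = (3:ℝ)/4 * P ^ (α + β) := by rw [hsum]; ring
    · rw [min_eq_right (by linarith : α ≤ α + β)]
      apply squeeze_log (c₁ := (1:ℝ)/3) (c₂ := (1:ℝ)) (by norm_num) (by norm_num)
      filter_upwards [(tendsto_rpow_atTop hα).eventually_ge_atTop 3,
        (tendsto_rpow_atTop hβ).eventually_ge_atTop 6,
        eventually_gt_atTop 1] with P hL3 hB6 hP1
      have hP0 : (0:ℝ) < P := lt_trans one_pos hP1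
      have hy : 0 < P ^ (β - α) / 2 := by
        have := Real.rpow_pos_of_pos hP0 (β - α); linarith
      have hab := core_big (x := P ^ β / 2) (y := P ^ (β - α) / 2) hL3 hy
        (by rw [hrw P hP0]; ring) (by linarith)
      rw [show -(P ^ β) / 2 = -(P ^ β / 2) by ring,
          show -(P ^ (β - α)) / 2 = -(P ^ (β - α) / 2) by ring]
      constructor
      · calc (1:ℝ)/3 * P ^ α = P ^ α / 3 := by ring
          _ ≤ _ := hab.1
      · calc _ ≤ P ^ α := hab.2
          _ = 1 * P ^ α := (one_mul _).symm
end

section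
/- Let α ≥ 0 and β be real numbers. Then lim_{P → ∞} (1/log P) · (1/2) log( 6π² P^α ( (1 + (P^α − 1) e^{−P^β/2}) / P^α )^{−3/2} ) equals α/2 + 3α/4 if β > 0, and equals α/2 if β ≤ 0, where the limit is over real P → ∞. -/
open Filter Real

private lemma inv_log_tendsto : Tendsto (fun P : ℝ => (Real.log P)⁻¹) atTop (nhds 0) :=
  tendsto_inv_atTop_zero.comp Real.tendsto_log_atTop

private lemma gdof_aux (α β l : ℝ) (hα : 0 ≤ α)
    (hg : Tendsto (fun P : ℝ =>
        Real.log ((1 + (P ^ α - 1) * Real.exp (-(P ^ β) / 2)) / P ^ α) / Real.log P)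
      atTop (nhds l)) :
    Tendsto (fun P : ℝ => (1 / Real.log P) *
        ((1 / 2) * Real.log (6 * Real.pi ^ 2 * P ^ α *
          ((1 + (P ^ α - 1) * Real.exp (-(P ^ β) / 2)) / P ^ α) ^ (-(3 : ℝ) / 2))))
      atTop (nhds (α / 2 + (-3 / 4) * l)) := by
  have h1 : Tendsto (fun P : ℝ => (1 / 2) * (Real.log (6 * Real.pi ^ 2) * (Real.log P)⁻¹)
      + α / 2 + (-3 / 4) *
        (Real.log ((1 + (P ^ α - 1) * Real.exp (-(P ^ β) / 2)) / P ^ α) / Real.log P))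
      atTop (nhds ((1 / 2) * (Real.log (6 * Real.pi ^ 2) * 0) + α / 2 + (-3 / 4) * l)) := by
    exact (((inv_log_tendsto.const_mul _).const_mul _).add tendsto_const_nhds).add
      (hg.const_mul _)
  have h2 : (1 / 2) * (Real.log (6 * Real.pi ^ 2) * 0) + α / 2 + (-3 / 4) * l
      = α / 2 + (-3 / 4) * l := by ring
  rw [h2] at h1
  refine h1.congr' ?_
  filter_upwards [eventually_ge_atTop (2 : ℝ)] with P hP2
  have hP1 : (1 : ℝ) < P := by linarith
  have hP0 : (0 : ℝ) < P := by linarith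
  have hlogP : 0 < Real.log P := Real.log_pos hP1
  have hPα : (1 : ℝ) ≤ P ^ α := Real.one_le_rpow hP1.le hα
  have hE : 0 < Real.exp (-(P ^ β) / 2) := Real.exp_pos _
  have hnum : 0 < 1 + (P ^ α - 1) * Real.exp (-(P ^ β) / 2) := by
    have : 0 ≤ (P ^ α - 1) * Real.exp (-(P ^ β) / 2) := mul_nonneg (by linarith) hE.le
    linarith
  have hPα0 : 0 < P ^ α := by linarith
  have hQ : 0 < (1 + (P ^ α - 1) * Real.exp (-(P ^ β) / 2)) / P ^ α := div_pos hnum hPα0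
  have hπ : (0 : ℝ) < 6 * Real.pi ^ 2 := by positivity
  rw [Real.log_mul (by positivity) (Real.rpow_pos_of_pos hQ _).ne',
    Real.log_mul hπ.ne' hPα0.ne', Real.log_rpow hP0, Real.log_rpow hQ]
  field_simp
  ring

/-- GDoF asymptotics of the term `6π² L ((1 + (L−1)e^{−σ²/2})/L)^{−3/2}` of the
phase-channel rate lower bound, with `L = P^α` and `σ² = P^β`: the normalized logarithm
tends to `α/2 + 3α/4` if `β > 0` and to `α/2` if `β ≤ 0`. -/
theorem gdof_phase_residual_term (α β : ℝ) (hα : 0 ≤ α) :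
    (0 < β →
      Tendsto (fun P : ℝ => (1 / Real.log P) *
          ((1 / 2) * Real.log (6 * Real.pi ^ 2 * P ^ α *
            ((1 + (P ^ α - 1) * Real.exp (-(P ^ β) / 2)) / P ^ α) ^ (-(3 : ℝ) / 2))))
        atTop (nhds (α / 2 + 3 * α / 4))) ∧
    (β ≤ 0 →
      Tendsto (fun P : ℝ => (1 / Real.log P) *
          ((1 / 2) * Real.log (6 * Real.pi ^ 2 * P ^ α *
            ((1 + (P ^ α - 1) * Real.exp (-(P ^ β) / 2)) / P ^ α) ^ (-(3 : ℝ) / 2))))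
        atTop (nhds (α / 2))) := by
  constructor
  · intro hβ
    -- P^α * exp(-(P^β)/2) → 0
    have h0 : Tendsto (fun P : ℝ => P ^ α * Real.exp (-(P ^ β) / 2)) atTop (nhds 0) := by
      have hc := (tendsto_rpow_mul_exp_neg_mul_atTop_nhds_zero (α / β) (1 / 2)
        (by norm_num)).comp (tendsto_rpow_atTop hβ)
      refine hc.congr' ?_
      filter_upwards [eventually_gt_atTop (0 : ℝ)] with P hP
      simp only [Function.comp_apply]
      rw [← Real.rpow_mul hP.le, show β * (α / β) = α by field_simp,
        show -(1 / 2 : ℝ) * P ^ β = -(P ^ β) / 2 by ring]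
    -- log num / log P → 0 by squeeze
    have hnum0 : Tendsto (fun P : ℝ =>
        Real.log (1 + (P ^ α - 1) * Real.exp (-(P ^ β) / 2)) / Real.log P) atTop (nhds 0) := by
      refine tendsto_of_tendsto_of_tendsto_of_le_of_le' tendsto_const_nhds h0 ?_ ?_
      · filter_upwards [eventually_ge_atTop (2 : ℝ)] with P hP2
        have hP1 : (1 : ℝ) < P := by linarith
        have hPα : (1 : ℝ) ≤ P ^ α := Real.one_le_rpow hP1.le hα
        have hE : 0 < Real.exp (-(P ^ β) / 2) := Real.exp_pos _
        have h1 : 0 ≤ (P ^ α - 1) * Real.exp (-(P ^ β) / 2) := mul_nonneg (by linarith) hE.le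
        exact div_nonneg (Real.log_nonneg (by linarith)) (Real.log_pos hP1).le
      · filter_upwards [eventually_ge_atTop (max 2 (Real.exp 1))] with P hP
        have hP2 : (2 : ℝ) ≤ P := le_trans (le_max_left _ _) hP
        have hPe : Real.exp 1 ≤ P := le_trans (le_max_right _ _) hP
        have hP1 : (1 : ℝ) < P := by linarith
        have hPα : (1 : ℝ) ≤ P ^ α := Real.one_le_rpow hP1.le hα
        have hE : 0 < Real.exp (-(P ^ β) / 2) := Real.exp_pos _
        have hE1 : Real.exp (-(P ^ β) / 2) ≤ 1 := by
          rw [Real.exp_le_one_iff]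
          have : 0 < P ^ β := Real.rpow_pos_of_pos (by linarith) _
          linarith
        have h1 : 0 ≤ (P ^ α - 1) * Real.exp (-(P ^ β) / 2) := mul_nonneg (by linarith) hE.le
        have hlog1 : 1 ≤ Real.log P := by
          rw [Real.le_log_iff_exp_le (by linarith)]; exact hPe
        have hln : 0 ≤ Real.log (1 + (P ^ α - 1) * Real.exp (-(P ^ β) / 2)) :=
          Real.log_nonneg (by linarith)
        have hub : Real.log (1 + (P ^ α - 1) * Real.exp (-(P ^ β) / 2))
            ≤ P ^ α * Real.exp (-(P ^ β) / 2) := by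
          have := Real.log_le_sub_one_of_pos (x := 1 + (P ^ α - 1) * Real.exp (-(P ^ β) / 2))
            (by linarith)
          nlinarith
        calc Real.log (1 + (P ^ α - 1) * Real.exp (-(P ^ β) / 2)) / Real.log P
            ≤ Real.log (1 + (P ^ α - 1) * Real.exp (-(P ^ β) / 2)) := by
              exact div_le_self hln hlog1
          _ ≤ P ^ α * Real.exp (-(P ^ β) / 2) := hub
    -- log Q / log P → -α
    have hg : Tendsto (fun P : ℝ =>
        Real.log ((1 + (P ^ α - 1) * Real.exp (-(P ^ β) / 2)) / P ^ α) / Real.log P)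
        atTop (nhds (-α)) := by
      have h3 : Tendsto (fun P : ℝ =>
          Real.log (1 + (P ^ α - 1) * Real.exp (-(P ^ β) / 2)) / Real.log P - α)
          atTop (nhds (0 - α)) := hnum0.sub tendsto_const_nhds
      rw [zero_sub] at h3
      refine h3.congr' ?_
      filter_upwards [eventually_ge_atTop (2 : ℝ)] with P hP2
      have hP1 : (1 : ℝ) < P := by linarith
      have hPα : (1 : ℝ) ≤ P ^ α := Real.one_le_rpow hP1.le hα
      have hE : 0 < Real.exp (-(P ^ β) / 2) := Real.exp_pos _
      have h1 : 0 ≤ (P ^ α - 1) * Real.exp (-(P ^ β) / 2) := mul_nonneg (by linarith) hE.le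
      have hlogP : 0 < Real.log P := Real.log_pos hP1
      rw [Real.log_div (by linarith) (by linarith), Real.log_rpow (by linarith)]
      field_simp
    have := gdof_aux α β (-α) hα hg
    have he : α / 2 + 3 * α / 4 = α / 2 + (-3 / 4) * (-α) := by ring
    rw [he]
    exact this
  · intro hβ
    have hg : Tendsto (fun P : ℝ =>
        Real.log ((1 + (P ^ α - 1) * Real.exp (-(P ^ β) / 2)) / P ^ α) / Real.log P)
        atTop (nhds 0) := by
      have hlo : Tendsto (fun P : ℝ => (-1 / 2) * (Real.log P)⁻¹) atTop (nhds ((-1 / 2) * 0)) :=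
        inv_log_tendsto.const_mul _
      rw [mul_zero] at hlo
      refine tendsto_of_tendsto_of_tendsto_of_le_of_le' hlo tendsto_const_nhds ?_ ?_
      · filter_upwards [eventually_ge_atTop (2 : ℝ)] with P hP2
        have hP1 : (1 : ℝ) < P := by linarith
        have hPα : (1 : ℝ) ≤ P ^ α := Real.one_le_rpow hP1.le hα
        have hE : 0 < Real.exp (-(P ^ β) / 2) := Real.exp_pos _
        have hlogP : 0 < Real.log P := Real.log_pos hP1
        have hPβ : P ^ β ≤ 1 := Real.rpow_le_one_of_one_le_of_nonpos hP1.le hβ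
        have hEge : Real.exp (-1 / 2 : ℝ) ≤ Real.exp (-(P ^ β) / 2) := by
          apply Real.exp_le_exp.2; linarith
        have hQge : Real.exp (-1 / 2 : ℝ)
            ≤ (1 + (P ^ α - 1) * Real.exp (-(P ^ β) / 2)) / P ^ α := by
          have hE1 : Real.exp (-(P ^ β) / 2) ≤ 1 := by
            rw [Real.exp_le_one_iff]
            have : 0 < P ^ β := Real.rpow_pos_of_pos (by linarith) _
            linarith
          have key : P ^ α * Real.exp (-(P ^ β) / 2)
              ≤ 1 + (P ^ α - 1) * Real.exp (-(P ^ β) / 2) := by nlinarith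
          calc Real.exp (-1 / 2 : ℝ) ≤ Real.exp (-(P ^ β) / 2) := hEge
            _ ≤ (1 + (P ^ α - 1) * Real.exp (-(P ^ β) / 2)) / P ^ α := by
              rw [le_div_iff₀ (by linarith)]
              linarith [key]
        have hlogQ : (-1 / 2 : ℝ) ≤ Real.log ((1 + (P ^ α - 1) * Real.exp (-(P ^ β) / 2)) / P ^ α) := by
          have := Real.log_le_log (Real.exp_pos _) hQge
          rwa [Real.log_exp] at this
        calc (-1 / 2 : ℝ) * (Real.log P)⁻¹ = (-1 / 2) / Real.log P := by
              ring
          _ ≤ Real.log ((1 + (P ^ α - 1) * Real.exp (-(P ^ β) / 2)) / P ^ α) / Real.log P := by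
              gcongr
      · filter_upwards [eventually_ge_atTop (2 : ℝ)] with P hP2
        have hP1 : (1 : ℝ) < P := by linarith
        have hPα : (1 : ℝ) ≤ P ^ α := Real.one_le_rpow hP1.le hα
        have hE : 0 < Real.exp (-(P ^ β) / 2) := Real.exp_pos _
        have hlogP : 0 < Real.log P := Real.log_pos hP1
        have hE1 : Real.exp (-(P ^ β) / 2) ≤ 1 := by
          rw [Real.exp_le_one_iff]
          have : 0 < P ^ β := Real.rpow_pos_of_pos (by linarith) _
          linarith
        have h1 : 0 ≤ (P ^ α - 1) * Real.exp (-(P ^ β) / 2) := mul_nonneg (by linarith) hE.le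
        have hQ1 : (1 + (P ^ α - 1) * Real.exp (-(P ^ β) / 2)) / P ^ α ≤ 1 := by
          rw [div_le_one (by linarith)]
          nlinarith
        have hlogQ : Real.log ((1 + (P ^ α - 1) * Real.exp (-(P ^ β) / 2)) / P ^ α) ≤ 0 :=
          Real.log_nonpos (by positivity) hQ1
        exact div_nonpos_of_nonpos_of_nonneg hlogQ hlogP.le
    have := gdof_aux α β 0 hα hg
    have he : α / 2 = α / 2 + (-3 / 4) * 0 := by ring
    rw [he]
    exact this
end

section
/- Let α ≥ 0 and β be real numbers. Then lim_{P → ∞} (1/log P) · [ 2 log( (1 + (P^α − 1) e^{−P^β/2}) / P^α ) + log(P + 2) ] equals 1 − 2α if β > 0, and equals 1 if β ≤ 0, where the limit is over real P → ∞. -/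
open Filter Real

/-- GDoF asymptotics of the leading amplitude-channel terms
`2 log((1 + (L−1)e^{−σ²/2})/L) + log(P + 2)` of the coherent-combining lower bound, with
`L = P^α` and `σ² = P^β`: the normalized sum tends to `1 − 2α` if `β > 0` and to `1` if
`β ≤ 0`. -/
theorem gdof_amplitude_leading_term (α β : ℝ) (hα : 0 ≤ α) :
    (0 < β →
      Tendsto (fun P : ℝ => (1 / Real.log P) *
          (2 * Real.log ((1 + (P ^ α - 1) * Real.exp (-(P ^ β) / 2)) / P ^ α) +
            Real.log (P + 2)))
        atTop (nhds (1 - 2 * α))) ∧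
    (β ≤ 0 →
      Tendsto (fun P : ℝ => (1 / Real.log P) *
          (2 * Real.log ((1 + (P ^ α - 1) * Real.exp (-(P ^ β) / 2)) / P ^ α) +
            Real.log (P + 2)))
        atTop (nhds 1)) := by
  have hinv : Tendsto (fun P : ℝ => 1 / Real.log P) atTop (nhds 0) := by
    exact Real.tendsto_log_atTop.inv_tendsto_atTop.congr
      (fun P => (one_div (Real.log P)).symm)
  -- log (P+2) / log P → 1
  have hratio : Tendsto (fun P : ℝ => Real.log (P + 2) / Real.log P) atTop (nhds 1) := by
    have hq : Tendsto (fun P : ℝ => (P + 2) / P) atTop (nhds 1) := by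
      have h1 : Tendsto (fun P : ℝ => 1 + 2 / P) atTop (nhds (1 + 0)) :=
        tendsto_const_nhds.add (tendsto_const_nhds.div_atTop tendsto_id)
      rw [add_zero] at h1
      refine h1.congr' ?_
      filter_upwards [eventually_gt_atTop (0 : ℝ)] with P hP
      field_simp
    have hlq : Tendsto (fun P : ℝ => Real.log ((P + 2) / P)) atTop (nhds 0) := by
      have := (Real.continuousAt_log one_ne_zero).tendsto.comp hq
      simpa [Function.comp_def] using this
    have hmain : Tendsto (fun P : ℝ => 1 + Real.log ((P + 2) / P) * (1 / Real.log P))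
        atTop (nhds (1 + 0 * 0)) := tendsto_const_nhds.add (hlq.mul hinv)
    rw [show (1 : ℝ) + 0 * 0 = 1 by ring] at hmain
    refine hmain.congr' ?_
    filter_upwards [eventually_gt_atTop (1 : ℝ)] with P hP
    have hP0 : (0 : ℝ) < P := lt_trans one_pos hP
    have hL : 0 < Real.log P := Real.log_pos hP
    rw [Real.log_div (by positivity) (ne_of_gt hP0)]
    field_simp
    ring
  -- eventual rewriting of the main function
  have hkey : ∀ᶠ P : ℝ in atTop,
      (1 / Real.log P) *
          (2 * Real.log ((1 + (P ^ α - 1) * Real.exp (-(P ^ β) / 2)) / P ^ α) +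
            Real.log (P + 2))
        = 2 * (Real.log (1 + (P ^ α - 1) * Real.exp (-(P ^ β) / 2)) / Real.log P)
            - 2 * α + Real.log (P + 2) / Real.log P := by
    filter_upwards [eventually_gt_atTop (1 : ℝ)] with P hP
    have hP0 : (0 : ℝ) < P := lt_trans one_pos hP
    have hL : 0 < Real.log P := Real.log_pos hP
    have h1 : (1 : ℝ) ≤ P ^ α := Real.one_le_rpow hP.le hα
    have hnum : 0 < 1 + (P ^ α - 1) * Real.exp (-(P ^ β) / 2) := by
      have := Real.exp_pos (-(P ^ β) / 2)
      nlinarith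
    have hrp : (0 : ℝ) < P ^ α := Real.rpow_pos_of_pos hP0 α
    rw [Real.log_div (ne_of_gt hnum) (ne_of_gt hrp), Real.log_rpow hP0]
    field_simp
  constructor
  · intro hβ
    have hbt : Tendsto (fun P : ℝ => P ^ β) atTop atTop := tendsto_rpow_atTop hβ
    have hexp : Tendsto (fun P : ℝ => Real.exp (-(P ^ β) / 2)) atTop (nhds 0) := by
      refine Real.tendsto_exp_atBot.comp ?_
      have h2 : Tendsto (fun y : ℝ => -y / 2) atTop atBot :=
        Tendsto.atBot_div_const (by norm_num) tendsto_neg_atTop_atBot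
      exact h2.comp hbt
    have hmul : Tendsto (fun P : ℝ => P ^ α * Real.exp (-(P ^ β) / 2)) atTop (nhds 0) := by
      have h0 := tendsto_rpow_mul_exp_neg_mul_atTop_nhds_zero (α / β) (1 / 2) (by norm_num)
      have h1 := h0.comp hbt
      refine h1.congr' ?_
      filter_upwards [eventually_gt_atTop (0 : ℝ)] with P hP
      have hβ0 : β ≠ 0 := ne_of_gt hβ
      simp only [Function.comp]
      have hc : β * (α / β) = α := by field_simp
      rw [← Real.rpow_mul hP.le, hc]
      ring_nf
    -- numerator tends to 1
    have hnum1 : Tendsto (fun P : ℝ => 1 + (P ^ α - 1) * Real.exp (-(P ^ β) / 2))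
        atTop (nhds 1) := by
      have h2 : Tendsto (fun P : ℝ => 1 + (P ^ α * Real.exp (-(P ^ β) / 2)
          - Real.exp (-(P ^ β) / 2))) atTop (nhds (1 + (0 - 0))) :=
        tendsto_const_nhds.add (hmul.sub hexp)
      rw [show (1 : ℝ) + (0 - 0) = 1 by ring] at h2
      exact h2.congr (fun P => by ring)
    have hg0 : Tendsto (fun P : ℝ =>
        Real.log (1 + (P ^ α - 1) * Real.exp (-(P ^ β) / 2))) atTop (nhds 0) := by
      have := (Real.continuousAt_log one_ne_zero).tendsto.comp hnum1
      simpa [Function.comp_def] using this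
    have hgL : Tendsto (fun P : ℝ =>
        Real.log (1 + (P ^ α - 1) * Real.exp (-(P ^ β) / 2)) / Real.log P)
        atTop (nhds 0) := by
      have := hg0.mul hinv
      rw [show (0 : ℝ) * 0 = 0 by ring] at this
      exact this.congr (fun P => by rw [mul_one_div])
    have hfin := ((hgL.const_mul 2).sub
      (tendsto_const_nhds : Tendsto (fun _ : ℝ => 2 * α) atTop (nhds (2 * α)))).add hratio
    rw [show (2 : ℝ) * 0 - 2 * α + 1 = 1 - 2 * α by ring] at hfin
    exact hfin.congr' (Filter.EventuallyEq.symm hkey)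
  · intro hβ
    -- squeeze: log(num)/log P → α
    have hgL : Tendsto (fun P : ℝ =>
        Real.log (1 + (P ^ α - 1) * Real.exp (-(P ^ β) / 2)) / Real.log P)
        atTop (nhds α) := by
      have hlo : Tendsto (fun P : ℝ => α - (1 / 2) * (1 / Real.log P)) atTop
          (nhds (α - 1 / 2 * 0)) := tendsto_const_nhds.sub (hinv.const_mul (1 / 2))
      rw [show α - 1 / 2 * 0 = α by ring] at hlo
      refine tendsto_of_tendsto_of_tendsto_of_le_of_le' hlo
        (tendsto_const_nhds : Tendsto (fun _ : ℝ => α) atTop (nhds α)) ?_ ?_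
      · filter_upwards [eventually_gt_atTop (1 : ℝ)] with P hP
        have hP0 : (0 : ℝ) < P := lt_trans one_pos hP
        have hL : 0 < Real.log P := Real.log_pos hP
        have h1 : (1 : ℝ) ≤ P ^ α := Real.one_le_rpow hP.le hα
        have hrp : (0 : ℝ) < P ^ α := Real.rpow_pos_of_pos hP0 α
        have hpb1 : P ^ β ≤ 1 := Real.rpow_le_one_of_one_le_of_nonpos hP.le hβ
        have he1 : Real.exp (-(1 : ℝ) / 2) ≤ Real.exp (-(P ^ β) / 2) :=
          Real.exp_le_exp.mpr (by linarith)
        have he2 : Real.exp (-(P ^ β) / 2) ≤ 1 := by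
          apply Real.exp_le_one_iff.mpr
          have : (0 : ℝ) ≤ P ^ β := Real.rpow_nonneg hP0.le β
          linarith
        have hc1 : Real.exp (-(1 : ℝ) / 2) ≤ 1 := by
          apply Real.exp_le_one_iff.mpr; norm_num
        have hc0 : 0 < Real.exp (-(1 : ℝ) / 2) := Real.exp_pos _
        have hlow : Real.exp (-(1 : ℝ) / 2) * P ^ α
            ≤ 1 + (P ^ α - 1) * Real.exp (-(P ^ β) / 2) := by
          nlinarith [mul_le_mul_of_nonneg_left he1 (by linarith : (0:ℝ) ≤ P ^ α - 1)]
        have hll : Real.log (Real.exp (-(1 : ℝ) / 2) * P ^ α)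
            ≤ Real.log (1 + (P ^ α - 1) * Real.exp (-(P ^ β) / 2)) :=
          Real.log_le_log (by positivity) hlow
        rw [Real.log_mul (ne_of_gt hc0) (ne_of_gt hrp), Real.log_exp,
          Real.log_rpow hP0] at hll
        rw [show α - 1 / 2 * (1 / Real.log P)
            = (-(1 : ℝ) / 2 + α * Real.log P) / Real.log P by field_simp; ring]
        exact div_le_div_of_nonneg_right hll hL.le
      · filter_upwards [eventually_gt_atTop (1 : ℝ)] with P hP
        have hP0 : (0 : ℝ) < P := lt_trans one_pos hP
        have hL : 0 < Real.log P := Real.log_pos hP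
        have h1 : (1 : ℝ) ≤ P ^ α := Real.one_le_rpow hP.le hα
        have hrp : (0 : ℝ) < P ^ α := Real.rpow_pos_of_pos hP0 α
        have he2 : Real.exp (-(P ^ β) / 2) ≤ 1 := by
          apply Real.exp_le_one_iff.mpr
          have : (0 : ℝ) ≤ P ^ β := Real.rpow_nonneg hP0.le β
          linarith
        have hup : 1 + (P ^ α - 1) * Real.exp (-(P ^ β) / 2) ≤ P ^ α := by
          nlinarith [Real.exp_pos (-(P ^ β) / 2)]
        have hnum : 0 < 1 + (P ^ α - 1) * Real.exp (-(P ^ β) / 2) := by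
          have := Real.exp_pos (-(P ^ β) / 2); nlinarith
        have hll : Real.log (1 + (P ^ α - 1) * Real.exp (-(P ^ β) / 2))
            ≤ α * Real.log P := by
          rw [← Real.log_rpow hP0]
          exact Real.log_le_log hnum hup
        rw [div_le_iff₀ hL]
        linarith
    have hfin := ((hgL.const_mul 2).sub
      (tendsto_const_nhds : Tendsto (fun _ : ℝ => 2 * α) atTop (nhds (2 * α)))).add hratio
    rw [show (2 : ℝ) * α - 2 * α + 1 = 1 by ring] at hfin
    exact hfin.congr' (Filter.EventuallyEq.symm hkey)
end
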